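/- Define ψ^n(p) = Σ_{k=0}^n (C(n,k) p^k (1-p)^{n-k})^2 and, for 0 ≤ u ≤ n/4, set p^n(u) = (1 - sqrt(1 - 4u/n))/2 and φ^n(u) = ψ^n(p^n(u)). Then φ^n(u) = (1/2π) · ∫_0^{2π} [1 - 2u(1 - cos θ)/n]^n dθ. -/

import Mathlib

open Real Finset

/-- `ψⁿ(p) = Σ_{k=0}^n (C(n,k) pᵏ (1-p)ⁿ⁻ᵏ)²`. -/
noncomputable def psi (n : ℕ) (p : ℝ) : ℝ :=
  ∑ k ∈ Finset.range (n + 1), ((n.choose k : ℝ) * p ^ k * (1 - p) ^ (n - k)) ^ 2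

/-- `pⁿ(u) = (1 - √(1 - 4u/n))/2`, a root of `p(1-p) = u/n`. -/
noncomputable def pn (n : ℕ) (u : ℝ) : ℝ := (1 - Real.sqrt (1 - 4 * u / n)) / 2

/-- `φⁿ(u) = ψⁿ(pⁿ(u))`. -/
noncomputable def phi (n : ℕ) (u : ℝ) : ℝ := psi n (pn n u)

lemma exp_int_integral (m : ℤ) :
    ∫ θ in (0:ℝ)..(2*π), Complex.exp ((m : ℂ) * Complex.I * θ) =
      if m = 0 then (2*π : ℂ) else 0 := by
  split_ifs with h
  · simp [h]
  · have hc : (m : ℂ) * Complex.I ≠ 0 := by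
      simp [Complex.I_ne_zero, h]
    rw [integral_exp_mul_complex hc]
    have h1 : (m : ℂ) * Complex.I * ((2*π : ℝ) : ℂ) = (m:ℂ) * (2 * π * Complex.I) := by
      push_cast; ring
    rw [h1, Complex.exp_int_mul_two_pi_mul_I]
    simp

lemma hA (p q θ : ℝ) : (((p^2+q^2+2*p*q*Real.cos θ : ℝ)) : ℂ)
    = ((p:ℂ) * Complex.exp (θ*Complex.I) + q) * ((p:ℂ) * Complex.exp (-(θ*Complex.I)) + q) := by
  rw [show -((θ:ℂ)*Complex.I) = (-θ:ℂ)*Complex.I by ring, Complex.exp_mul_I, Complex.exp_mul_I,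
    Complex.sin_neg, Complex.cos_neg]
  have hs := Complex.sin_sq_add_cos_sq (θ:ℂ)
  push_cast [Complex.ofReal_cos]
  linear_combination -(p:ℂ)^2 * hs + (p:ℂ)^2 * Complex.sin θ^2 * Complex.I_sq

lemma key (n : ℕ) (p q : ℝ) :
    ∫ θ in (0:ℝ)..(2*π), (p^2+q^2+2*p*q*Real.cos θ)^n =
      2*π * ∑ k ∈ Finset.range (n+1), ((n.choose k : ℝ) * p^k * q^(n-k))^2 := by
  have hpt : ∀ θ : ℝ, (((p^2+q^2+2*p*q*Real.cos θ)^n : ℝ) : ℂ) =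
      ∑ k ∈ range (n+1), ∑ j ∈ range (n+1),
        ((((n.choose k : ℝ) * p^k * q^(n-k)) * ((n.choose j : ℝ) * p^j * q^(n-j)) : ℝ) : ℂ) *
          Complex.exp ((((k:ℤ) - (j:ℤ) : ℤ) : ℂ) * Complex.I * θ) := by
    intro θ
    rw [Complex.ofReal_pow, hA p q θ, mul_pow, add_pow, add_pow, Finset.sum_mul_sum]
    refine Finset.sum_congr rfl fun k _ => Finset.sum_congr rfl fun j _ => ?_
    rw [show ((((k:ℤ) - (j:ℤ) : ℤ) : ℂ) * Complex.I * θ)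
        = (k:ℕ)*((θ:ℂ)*Complex.I) + (j:ℕ)*(-((θ:ℂ)*Complex.I)) by push_cast; ring,
      Complex.exp_add, Complex.exp_nat_mul, Complex.exp_nat_mul]
    push_cast
    ring
  have hC : ((∫ θ in (0:ℝ)..(2*π), (p^2+q^2+2*p*q*Real.cos θ)^n : ℝ) : ℂ)
      = ((2*π * ∑ k ∈ Finset.range (n+1), ((n.choose k : ℝ) * p^k * q^(n-k))^2 : ℝ) : ℂ) := by
    rw [← intervalIntegral.integral_ofReal]
    simp only [hpt]
    rw [intervalIntegral.integral_finset_sum]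
    · have : ∀ k ∈ range (n+1),
          (∫ θ in (0:ℝ)..(2*π), ∑ j ∈ range (n+1),
            ((((n.choose k : ℝ) * p^k * q^(n-k)) * ((n.choose j : ℝ) * p^j * q^(n-j)) : ℝ) : ℂ) *
              Complex.exp ((((k:ℤ) - (j:ℤ) : ℤ) : ℂ) * Complex.I * θ))
          = ((((n.choose k : ℝ) * p^k * q^(n-k))^2 : ℝ) : ℂ) * (2*π) := by
        intro k hk
        rw [intervalIntegral.integral_finset_sum]
        · have h2 : ∀ j ∈ range (n+1),
              (∫ θ in (0:ℝ)..(2*π),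
                ((((n.choose k : ℝ) * p^k * q^(n-k)) * ((n.choose j : ℝ) * p^j * q^(n-j)) : ℝ) : ℂ) *
                  Complex.exp ((((k:ℤ) - (j:ℤ) : ℤ) : ℂ) * Complex.I * θ))
              = if j = k then ((((n.choose k : ℝ) * p^k * q^(n-k))^2 : ℝ) : ℂ) * (2*π) else 0 := by
            intro j _
            rw [intervalIntegral.integral_const_mul, exp_int_integral]
            by_cases hjk : j = k
            · subst hjk
              rw [sub_self, if_pos rfl, if_pos rfl]
              push_cast; ring
            · rw [if_neg (by omega), if_neg hjk, mul_zero]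
          rw [Finset.sum_congr rfl h2, Finset.sum_ite_eq' (range (n+1)) k, if_pos hk]
        · intro j _
          exact (Continuous.intervalIntegrable (by fun_prop) _ _)
      rw [Finset.sum_congr rfl this]
      push_cast
      rw [← Finset.sum_mul]
      ring
    · intro k _
      apply Continuous.intervalIntegrable
      fun_prop
  exact_mod_cast hC

theorem phi_integral_formula (n : ℕ) (u : ℝ) (hu : 0 ≤ u) (hun : u ≤ n / 4) :
    phi n u = (1 / (2 * π)) *
      ∫ θ in (0 : ℝ)..(2 * π), (1 - 2 * u * (1 - Real.cos θ) / n) ^ n := by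
  set p := pn n u with hp
  have hpq : p * (1 - p) = u / n := by
    rcases Nat.eq_zero_or_pos n with hn | hn
    · have hu0 : u = 0 := le_antisymm (by simpa [hn] using hun) hu
      simp [hp, pn, hn, hu0]
    · have hn0 : (0:ℝ) < n := by exact_mod_cast hn
      have h4 : 0 ≤ 1 - 4 * u / n := by
        rw [sub_nonneg, div_le_one hn0]
        linarith
      have hs := Real.sq_sqrt h4
      rw [hp, pn]
      linear_combination (-1/4 : ℝ) * hs
  have hint : ∀ θ : ℝ, (1 - 2 * u * (1 - Real.cos θ) / n) ^ n
      = (p^2 + (1-p)^2 + 2*p*(1-p)*Real.cos θ) ^ n := by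
    intro θ
    congr 1
    rw [show (1 : ℝ) - 2 * u * (1 - Real.cos θ) / n = 1 - 2 * (u/n) * (1 - Real.cos θ) by ring,
      ← hpq]
    ring
  have hkey := key n p (1 - p)
  simp only [hint]
  rw [hkey, phi, psi]
  field_simp
  rfl
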